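/- For every finite bipartite simple graph G with parts V_L and V_R and all integers n, k with 1 < n < k < 2n, there exist a finite simple graph G' with V_L ∪ V_R ⊆ V(G') and disjoint sets Blue_0, Red_0 ⊆ V(G') \ (V_L ∪ V_R) such that: (a) every vertex of V(G') \ (V_L ∪ V_R ∪ Blue_0 ∪ Red_0) is at graph distance at most k in G' from some vertex of Blue_0 and at distance at most k from some vertex of Red_0; (b) every x ∈ V_L is at distance at most k from some vertex of Red_0, at distance at least k+1 from every vertex of Blue_0, and at distance at least n+1 from every vertex of Red_0; (b') every y ∈ V_R is at distance at most k from some vertex of Blue_0, at distance at least k+1 from every vertex of Red_0, and at distance at least n+1 from every vertex of Blue_0; (c) for distinct u, v ∈ V_L ∪ V_R, dist_{G'}(u,v) = n if uv is an edge of G, and dist_{G'}(u,v) ≥ k+1 otherwise; (d) any two distinct vertices of Blue_0 ∪ Red_0 are at distance at least k+1 in G'. -/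

import Mathlib

universe u

namespace Stmt16

attribute [local instance] Classical.propDecidable

variable {V : Type u}

abbrev EIdx (G : SimpleGraph V) (VL : Finset V) : Type u :=
  {p : V × V // p.1 ∈ VL ∧ G.Adj p.1 p.2}

abbrev Site (G : SimpleGraph V) (VL : Finset V) (n k : ℕ) : Type u :=
  (EIdx G VL × Fin (n - 1)) ⊕ (V × Fin (k - 1))

def sg (k : ℕ) : ℕ := (k - 2) / 2

abbrev GN (k : ℕ) : Type := Fin (sg k) ⊕ Fin (k + 2)

abbrev W (G : SimpleGraph V) (VL : Finset V) (n k : ℕ) : Type u :=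
  V ⊕ (Site G VL n k ⊕ ((Site G VL n k × GN k) ⊕ V))

variable {G : SimpleGraph V} {VL : Finset V} {n k : ℕ}

instance [Finite V] : Finite (W G VL n k) := by
  unfold W Site EIdx GN
  infer_instance

@[match_pattern] def orig (v : V) : W G VL n k := Sum.inl v
@[match_pattern] def sk (s : Site G VL n k) : W G VL n k := Sum.inr (Sum.inl s)
@[match_pattern] def gad (s : Site G VL n k) (g : GN k) : W G VL n k :=
  Sum.inr (Sum.inr (Sum.inl (s, g)))
@[match_pattern] def tnd (v : V) : W G VL n k := Sum.inr (Sum.inr (Sum.inr v))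

def m0 (k : ℕ) : ℕ := (k + 1) / 2
def m1 (k : ℕ) : ℕ := (k + 2) / 2

/-- the base adjacency relation of `G'` (gets symmetrised by `fromRel`). -/
def R (G : SimpleGraph V) (VL : Finset V) (n k : ℕ) (a b : W G VL n k) : Prop :=
  (∃ e i, a = orig e.1.1 ∧ b = sk (Sum.inl (e, i)) ∧ i.val = 0) ∨
  (∃ e i, a = orig e.1.2 ∧ b = sk (Sum.inl (e, i)) ∧ i.val = n - 2) ∨
  (∃ u j, a = orig u ∧ b = sk (Sum.inr (u, j)) ∧ j.val = 0) ∨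
  (∃ e i i', a = sk (Sum.inl (e, i)) ∧ b = sk (Sum.inl (e, i')) ∧ i'.val = i.val + 1) ∨
  (∃ u j j', a = sk (Sum.inr (u, j)) ∧ b = sk (Sum.inr (u, j')) ∧ j'.val = j.val + 1) ∨
  (∃ u j, a = sk (Sum.inr (u, j)) ∧ b = tnd u ∧ j.val = k - 2) ∨
  (∃ s st, a = sk s ∧ b = gad s (Sum.inl st) ∧ st.val = 0) ∨
  (∃ s z, a = sk s ∧ b = gad s (Sum.inr z) ∧ sg k = 0 ∧ m0 k ≤ z.val ∧ z.val ≤ m1 k) ∨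
  (∃ s st st', a = gad s (Sum.inl st) ∧ b = gad s (Sum.inl st') ∧ st'.val = st.val + 1) ∨
  (∃ s st z, a = gad s (Sum.inl st) ∧ b = gad s (Sum.inr z) ∧ st.val + 1 = sg k ∧
      m0 k ≤ z.val ∧ z.val ≤ m1 k) ∨
  (∃ s z z', a = gad s (Sum.inr z) ∧ b = gad s (Sum.inr z') ∧ z'.val = z.val + 1)

def G' (G : SimpleGraph V) (VL : Finset V) (n k : ℕ) : SimpleGraph (W G VL n k) :=
  SimpleGraph.fromRel (R G VL n k)

/-! ### potentials -/

def gamma (k : ℕ) : GN k → ℕ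
  | Sum.inl st => st.val + 1
  | Sum.inr z => sg k + 1 + (if z.val < m0 k then m0 k - z.val else z.val - m1 k)

def betaB (k : ℕ) : GN k → ℕ
  | Sum.inl st => k - 1 - st.val
  | Sum.inr z => z.val

def betaR (k : ℕ) : GN k → ℕ
  | Sum.inl st => k - 1 - st.val
  | Sum.inr z => k + 1 - z.val

/-- potential centred at a gadget colour vertex (blue if `c`, else red) of gadget `s0`. -/
noncomputable def famA (s0 : Site G VL n k) (c : Bool) : W G VL n k → ℕ
  | sk s => if s = s0 then k else k + 1
  | gad s g => if s = s0 then (if c then betaB k g else betaR k g) else k + 1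
  | _ => k + 1

/-- potential centred at `tnd x`. -/
noncomputable def famB (k : ℕ) (x : V) : W G VL n k → ℕ
  | orig v => if v = x then k else k + 1
  | sk (Sum.inl _) => k + 1
  | sk (Sum.inr (u, j)) => if u = x then k - 1 - j.val else k + 1
  | gad (Sum.inl _) _ => k + 1
  | gad (Sum.inr (u, j)) g => if u = x then min (k + 1) (k - 1 - j.val + gamma k g) else k + 1
  | tnd v => if v = x then 0 else k + 1

noncomputable def base (G : SimpleGraph V) (n k : ℕ) (u v : V) : ℕ :=
  if v = u then 0 else if G.Adj u v then n else k + 1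

noncomputable def hostb (G : SimpleGraph V) (VL : Finset V) (n k : ℕ) (u : V) : Site G VL n k → ℕ
  | Sum.inl (e, i) =>
      min (base G n k u e.1.1 + (i.val + 1)) (base G n k u e.1.2 + (n - 1 - i.val))
  | Sum.inr (v, j) => base G n k u v + (j.val + 1)

/-- potential centred at `orig u`. -/
noncomputable def famC (u : V) : W G VL n k → ℕ
  | orig v => base G n k u v
  | sk s => min (k + 1) (hostb G VL n k u s)
  | gad s g => min (k + 1) (hostb G VL n k u s + gamma k g)
  | tnd v => min (k + 1) (base G n k u v + k)

/-! ### master lemmas : lower bounds from Lipschitz potentials, upper bounds from chains -/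

section Master
variable {α : Type*} {H : SimpleGraph α}

lemma walk_lower (f : α → ℕ) (hf : ∀ a b, H.Adj a b → f b ≤ f a + 1)
    {u v : α} (p : H.Walk u v) : (f v : ℕ∞) ≤ (f u : ℕ∞) + p.length := by
  induction p with
  | nil => simp
  | @cons a b c hadj q ih =>
      have h1 := hf _ _ hadj
      have : (f c : ℕ∞) ≤ (f b : ℕ∞) + q.length := ih
      have h2 : (f b : ℕ∞) ≤ (f a : ℕ∞) + 1 := by exact_mod_cast h1
      calc (f c : ℕ∞) ≤ (f b : ℕ∞) + q.length := ih
        _ ≤ ((f a : ℕ∞) + 1) + q.length := by gcongr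
        _ = (f a : ℕ∞) + (SimpleGraph.Walk.cons hadj q).length := by
            rw [SimpleGraph.Walk.length_cons]
            push_cast
            ring

lemma le_edist_of (f : α → ℕ) (hf : ∀ a b, H.Adj a b → f b ≤ f a + 1)
    {u v : α} {m : ℕ} (h0 : f u = 0) (hm : m ≤ f v) : (m : ℕ∞) ≤ H.edist u v := by
  by_cases htop : H.edist u v = ⊤
  · rw [htop]; exact le_top
  · obtain ⟨p, hp⟩ := SimpleGraph.exists_walk_of_edist_ne_top htop
    have := walk_lower f hf p
    rw [hp, h0] at this
    simp only [Nat.cast_zero, zero_add] at this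
    exact le_trans (by exact_mod_cast hm) this

lemma chain_le (f : ℕ → α) (a L : ℕ)
    (h : ∀ i, a ≤ i → i < a + L → H.Adj (f i) (f (i + 1))) :
    H.edist (f a) (f (a + L)) ≤ (L : ℕ∞) := by
  induction L with
  | zero => simp [SimpleGraph.edist_self]
  | succ L ih =>
      have h1 : H.edist (f a) (f (a + L)) ≤ (L : ℕ∞) :=
        ih (fun i hi hi2 => h i hi (by omega))
      have h2 : H.edist (f (a + L)) (f (a + L + 1)) ≤ (1 : ℕ∞) := by
        have := SimpleGraph.edist_le (h (a + L) (by omega) (by omega)).toWalk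
        simpa using this
      have h3 : a + (L + 1) = (a + L) + 1 := by omega
      rw [h3]
      calc H.edist (f a) (f (a + L + 1))
          ≤ H.edist (f a) (f (a + L)) + H.edist (f (a + L)) (f (a + L + 1)) :=
            SimpleGraph.edist_triangle
        _ ≤ (L : ℕ∞) + 1 := add_le_add h1 h2
        _ = ((L + 1 : ℕ) : ℕ∞) := by push_cast; ring

end Master

/-! ### Lipschitz properties of the potentials -/

section Lip
variable (hn : 1 < n) (hnk : n < k)

lemma famA_lip (hn : 1 < n) (hnk : n < k) (s0 : Site G VL n k) (c : Bool) :
    ∀ a b, R G VL n k a b → famA s0 c a ≤ famA s0 c b + 1 ∧ famA s0 c b ≤ famA s0 c a + 1 := by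
  intro a b h
  have hk3 : 3 ≤ k := by omega
  rcases h with ⟨e, i, rfl, rfl, hi⟩ | ⟨e, i, rfl, rfl, hi⟩ | ⟨u, j, rfl, rfl, hj⟩ |
    ⟨e, i, i', rfl, rfl, hii⟩ | ⟨u, j, j', rfl, rfl, hjj⟩ | ⟨u, j, rfl, rfl, hj⟩ |
    ⟨s, st, rfl, rfl, hst⟩ | ⟨s, z, rfl, rfl, hsg, hz1, hz2⟩ |
    ⟨s, st, st', rfl, rfl, hss⟩ | ⟨s, st, z, rfl, rfl, hst, hz1, hz2⟩ |
    ⟨s, z, z', rfl, rfl, hzz⟩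
  · simp only [famA]; split_ifs <;> omega
  · simp only [famA]; split_ifs <;> omega
  · simp only [famA]; split_ifs <;> omega
  · simp only [famA]; split_ifs <;> omega
  · simp only [famA]; split_ifs <;> omega
  · simp only [famA]; split_ifs <;> omega
  · have := st.isLt
    simp only [famA, sg] at *
    cases c <;> simp only [betaB, betaR, if_true, if_false, Bool.false_eq_true] <;>
      split_ifs <;> omega
  · have := z.isLt
    simp only [famA, sg, m0, m1] at *
    cases c <;> simp only [betaB, betaR, if_true, if_false, Bool.false_eq_true] <;>
      split_ifs <;> omega
  · have := st.isLt; have := st'.isLt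
    simp only [famA, sg, m0, m1] at *
    cases c <;> simp only [betaB, betaR, if_true, if_false, Bool.false_eq_true] <;>
      split_ifs <;> omega
  · have := st.isLt; have := z.isLt
    simp only [famA, sg, m0, m1] at *
    cases c <;> simp only [betaB, betaR, if_true, if_false, Bool.false_eq_true] <;>
      split_ifs <;> omega
  · have := z.isLt; have := z'.isLt
    simp only [famA, sg, m0, m1] at *
    cases c <;> simp only [betaB, betaR, if_true, if_false, Bool.false_eq_true] <;>
      split_ifs <;> omega

lemma famB_lip (hn : 1 < n) (hnk : n < k) (x : V) :
    ∀ a b, R G VL n k a b →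
      famB k x a ≤ famB k x b + 1 ∧ famB k x b ≤ famB k x a + 1 := by
  intro a b h
  have hk3 : 3 ≤ k := by omega
  rcases h with ⟨e, i, rfl, rfl, hi⟩ | ⟨e, i, rfl, rfl, hi⟩ | ⟨u, j, rfl, rfl, hj⟩ |
    ⟨e, i, i', rfl, rfl, hii⟩ | ⟨u, j, j', rfl, rfl, hjj⟩ | ⟨u, j, rfl, rfl, hj⟩ |
    ⟨s, st, rfl, rfl, hst⟩ | ⟨s, z, rfl, rfl, hsg, hz1, hz2⟩ |
    ⟨s, st, st', rfl, rfl, hss⟩ | ⟨s, st, z, rfl, rfl, hst, hz1, hz2⟩ |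
    ⟨s, z, z', rfl, rfl, hzz⟩
  · simp only [famB]; split_ifs <;> omega
  · simp only [famB]; split_ifs <;> omega
  · have := j.isLt; simp only [famB]; split_ifs <;> omega
  · simp only [famB]; omega
  · have := j.isLt; have := j'.isLt; simp only [famB]; split_ifs <;> omega
  · have := j.isLt; simp only [famB]; split_ifs <;> omega
  · rcases s with ⟨e, i⟩ | ⟨u, j⟩ <;>
      · have := st.isLt
        simp only [famB, gamma, sg, m0, m1] at *
        first | (split_ifs <;> omega) | omega
  · rcases s with ⟨e, i⟩ | ⟨u, j⟩ <;>
      · have := z.isLt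
        simp only [famB, gamma, sg, m0, m1] at *
        first | (delta m0 m1 at *; split_ifs <;> omega) | omega
  · rcases s with ⟨e, i⟩ | ⟨u, j⟩ <;>
      · have := st.isLt; have := st'.isLt
        simp only [famB, gamma, sg, m0, m1] at *
        first | (split_ifs <;> omega) | omega
  · rcases s with ⟨e, i⟩ | ⟨u, j⟩ <;>
      · have := st.isLt; have := z.isLt
        simp only [famB, gamma, sg, m0, m1] at *
        first | (delta m0 m1 at *; split_ifs <;> omega) | omega
  · rcases s with ⟨e, i⟩ | ⟨u, j⟩ <;>
      · have := z.isLt; have := z'.isLt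
        simp only [famB, gamma, sg, m0, m1] at *
        first | (delta m0 m1 at *; split_ifs <;> omega) | omega

lemma base_cases (u v : V) :
    base G n k u v = 0 ∨ base G n k u v = n ∨ base G n k u v = k + 1 := by
  unfold base; split_ifs <;> tauto

lemma base_eq_zero (hn : 1 < n) (hnk : n < k) {u v : V}
    (h : base G n k u v = 0) : v = u := by
  unfold base at h
  by_cases h1 : v = u
  · exact h1
  · rw [if_neg h1] at h
    by_cases h2 : G.Adj u v
    · rw [if_pos h2] at h; omega
    · rw [if_neg h2] at h; omega

lemma base_pair (hn : 1 < n) (hnk : n < k) {x y : V} (hxy : G.Adj x y) (u : V) :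
    (base G n k u x = 0 → base G n k u y = n) ∧
    (base G n k u y = 0 → base G n k u x = n) := by
  constructor
  · intro h
    have hx : x = u := base_eq_zero (G := G) hn hnk h
    subst hx
    unfold base
    rw [if_neg (by exact fun hyu => G.irrefl (hyu ▸ hxy)), if_pos hxy]
  · intro h
    have hy : y = u := base_eq_zero (G := G) hn hnk h
    subst hy
    unfold base
    rw [if_neg (by exact fun hxu => G.irrefl (hxu ▸ hxy)), if_pos hxy.symm]

lemma famC_lip (hn : 1 < n) (hnk : n < k) (hk2n : k < 2 * n) (u : V) :
    ∀ a b, R G VL n k a b → famC u a ≤ famC u b + 1 ∧ famC u b ≤ famC u a + 1 := by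
  intro a b h
  have hk3 : 3 ≤ k := by omega
  rcases h with ⟨e, i, rfl, rfl, hi⟩ | ⟨e, i, rfl, rfl, hi⟩ | ⟨v, j, rfl, rfl, hj⟩ |
    ⟨e, i, i', rfl, rfl, hii⟩ | ⟨v, j, j', rfl, rfl, hjj⟩ | ⟨v, j, rfl, rfl, hj⟩ |
    ⟨s, st, rfl, rfl, hst⟩ | ⟨s, z, rfl, rfl, hsg, hz1, hz2⟩ |
    ⟨s, st, st', rfl, rfl, hss⟩ | ⟨s, st, z, rfl, rfl, hst, hz1, hz2⟩ |
    ⟨s, z, z', rfl, rfl, hzz⟩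
  · have h1 := base_cases (G := G) (n := n) (k := k) u e.1.1
    have h2 := base_cases (G := G) (n := n) (k := k) u e.1.2
    have h3 := base_pair (G := G) hn hnk e.2.2 u
    have := i.isLt
    simp only [famC, hostb]
    rcases h1 with h1 | h1 | h1 <;> rcases h2 with h2 | h2 | h2 <;>
      first
        | omega
        | (have h4 := h3.1 h1; omega)
        | (have h4 := h3.2 h2; omega)
  · have h1 := base_cases (G := G) (n := n) (k := k) u e.1.1
    have h2 := base_cases (G := G) (n := n) (k := k) u e.1.2
    have h3 := base_pair (G := G) hn hnk e.2.2 u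
    have := i.isLt
    simp only [famC, hostb]
    rcases h1 with h1 | h1 | h1 <;> rcases h2 with h2 | h2 | h2 <;>
      first
        | omega
        | (have h4 := h3.1 h1; omega)
        | (have h4 := h3.2 h2; omega)
  · have h1 := base_cases (G := G) (n := n) (k := k) u v
    have := j.isLt
    simp only [famC, hostb]
    rcases h1 with h1 | h1 | h1 <;> try rcases h2 with h2 | h2 | h2
    all_goals omega
  · have h1 := base_cases (G := G) (n := n) (k := k) u e.1.1
    have h2 := base_cases (G := G) (n := n) (k := k) u e.1.2
    have := i.isLt; have := i'.isLt
    simp only [famC, hostb]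
    rcases h1 with h1 | h1 | h1 <;> try rcases h2 with h2 | h2 | h2
    all_goals omega
  · have h1 := base_cases (G := G) (n := n) (k := k) u v
    have := j.isLt; have := j'.isLt
    simp only [famC, hostb]
    rcases h1 with h1 | h1 | h1 <;> try rcases h2 with h2 | h2 | h2
    all_goals omega
  · have h1 := base_cases (G := G) (n := n) (k := k) u v
    have := j.isLt
    simp only [famC, hostb]
    rcases h1 with h1 | h1 | h1 <;> try rcases h2 with h2 | h2 | h2
    all_goals omega
  · have := st.isLt
    simp only [famC, gamma, sg, m0, m1] at *
    omega
  · have := z.isLt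
    simp only [famC, gamma, sg, m0, m1] at *
    delta m0 m1 at *; split_ifs <;> omega
  · have := st.isLt; have := st'.isLt
    simp only [famC, gamma, sg, m0, m1] at *
    omega
  · have := st.isLt; have := z.isLt
    simp only [famC, gamma, sg, m0, m1] at *
    delta m0 m1 at *; split_ifs <;> omega
  · have := z.isLt; have := z'.isLt
    simp only [famC, gamma, sg, m0, m1] at *
    delta m0 m1 at *; split_ifs <;> omega

end Lip

/-- turn a two–sided Lipschitz bound along `R` into one along `G'`-adjacency. -/
lemma lip_adj (f : W G VL n k → ℕ)
    (hR : ∀ a b, R G VL n k a b → f a ≤ f b + 1 ∧ f b ≤ f a + 1) :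
    ∀ a b, (G' G VL n k).Adj a b → f b ≤ f a + 1 := by
  intro a b h
  rw [G', SimpleGraph.fromRel_adj] at h
  rcases h with ⟨-, h | h⟩
  · exact (hR _ _ h).2
  · exact (hR _ _ h).1

/-! ### chains for upper bounds -/

lemma adjR {a b : W G VL n k} (h1 : a ≠ b) (h2 : R G VL n k a b ∨ R G VL n k b a) :
    (G' G VL n k).Adj a b := by
  rw [G', SimpleGraph.fromRel_adj]; exact ⟨h1, h2⟩

def Pchain (e : EIdx G VL) : ℕ → W G VL n k := fun t =>
  if h0 : t = 0 then orig e.1.1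
  else if h : t ≤ n - 1 then sk (Sum.inl (e, ⟨t - 1, by omega⟩))
  else orig e.1.2

def Tchain (k : ℕ) (v : V) : ℕ → W G VL n k := fun t =>
  if h0 : t = 0 then orig v
  else if h : t ≤ k - 1 then sk (Sum.inr (v, ⟨t - 1, by omega⟩))
  else tnd v

def GBchain (s : Site G VL n k) : ℕ → W G VL n k := fun t =>
  if h0 : t = 0 then sk s
  else if h : t ≤ sg k then gad s (Sum.inl ⟨t - 1, by omega⟩)
  else gad s (Sum.inr ⟨(k - t) % (k + 2), Nat.mod_lt _ (by omega)⟩)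

def GRchain (s : Site G VL n k) : ℕ → W G VL n k := fun t =>
  if h0 : t = 0 then sk s
  else if h : t ≤ sg k then gad s (Sum.inl ⟨t - 1, by omega⟩)
  else gad s (Sum.inr ⟨min (t + 1) (k + 1), by omega⟩)

def ZBchain (s : Site G VL n k) (z : Fin (k + 2)) : ℕ → W G VL n k := fun t =>
  gad s (Sum.inr ⟨z.val - t, by have := z.isLt; omega⟩)

def ZRchain (s : Site G VL n k) (z : Fin (k + 2)) : ℕ → W G VL n k := fun t =>
  gad s (Sum.inr ⟨min (z.val + t) (k + 1), by omega⟩)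

section Evals
variable {e : EIdx G VL} {v : V} {s : Site G VL n k} {z : Fin (k + 2)} {t : ℕ}

lemma Pchain_eval0 : Pchain (n := n) (k := k) e 0 = orig e.1.1 := by simp [Pchain]

lemma Pchain_evalm (h1 : 1 ≤ t) (h2 : t ≤ n - 1) :
    Pchain (n := n) (k := k) e t = sk (Sum.inl (e, ⟨t - 1, by omega⟩)) := by
  unfold Pchain; rw [dif_neg (by omega), dif_pos h2]

lemma Pchain_evale (h1 : n - 1 < t) : Pchain (n := n) (k := k) e t = orig e.1.2 := by
  unfold Pchain; rw [dif_neg (by omega), dif_neg (by omega)]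

lemma Tchain_eval0 : Tchain (G := G) (VL := VL) (n := n) k v 0 = orig v := by simp [Tchain]

lemma Tchain_evalm (h1 : 1 ≤ t) (h2 : t ≤ k - 1) :
    Tchain (G := G) (VL := VL) (n := n) k v t = sk (Sum.inr (v, ⟨t - 1, by omega⟩)) := by
  unfold Tchain; rw [dif_neg (by omega), dif_pos h2]

lemma Tchain_evale (h1 : k - 1 < t) : Tchain (G := G) (VL := VL) (n := n) k v t = tnd v := by
  unfold Tchain; rw [dif_neg (by omega), dif_neg (by omega)]

lemma GBchain_eval0 : GBchain (n := n) s 0 = sk s := by simp [GBchain]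

lemma GBchain_evalm (h1 : 1 ≤ t) (h2 : t ≤ sg k) :
    GBchain (n := n) s t = gad s (Sum.inl ⟨t - 1, by omega⟩) := by
  unfold GBchain; rw [dif_neg (by omega), dif_pos h2]

lemma GBchain_evale (h1 : sg k < t) (h2 : t ≤ k) (h3 : 3 ≤ k) :
    GBchain (n := n) s t = gad s (Sum.inr ⟨k - t, by omega⟩) := by
  unfold GBchain; rw [dif_neg (by omega), dif_neg (by omega)]
  congr 2
  exact Fin.ext (by simp [Nat.mod_eq_of_lt (show k - t < k + 2 by omega)])

lemma GRchain_eval0 : GRchain (n := n) s 0 = sk s := by simp [GRchain]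

lemma GRchain_evalm (h1 : 1 ≤ t) (h2 : t ≤ sg k) :
    GRchain (n := n) s t = gad s (Sum.inl ⟨t - 1, by omega⟩) := by
  unfold GRchain; rw [dif_neg (by omega), dif_pos h2]

lemma GRchain_evale (h1 : sg k < t) (h2 : t ≤ k) (h3 : 3 ≤ k) :
    GRchain (n := n) s t = gad s (Sum.inr ⟨t + 1, by omega⟩) := by
  unfold GRchain; rw [dif_neg (by omega), dif_neg (by omega)]
  congr 2
  exact Fin.ext (by simp [Nat.min_eq_left (show t + 1 ≤ k + 1 by omega)])

lemma ZBchain_eval : ZBchain (n := n) s z t =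
    gad s (Sum.inr ⟨z.val - t, by have := z.isLt; omega⟩) := rfl

lemma ZRchain_eval (h : t ≤ k + 1 - z.val) : ZRchain (n := n) s z t =
    gad s (Sum.inr ⟨z.val + t, by have := z.isLt; omega⟩) := by
  unfold ZRchain
  congr 2
  exact Fin.ext (by have := z.isLt; simp [Nat.min_eq_left (show z.val + t ≤ k + 1 by omega)])

end Evals

section Chains

lemma sg_facts (h3 : 3 ≤ k) :
    sg k + 1 + m0 k = k ∧ m1 k = sg k + 2 ∧ m0 k ≤ m1 k ∧ m1 k ≤ k ∧ 1 ≤ m0 k ∧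
      k - sg k - 1 = m0 k ∧ sg k ≤ k - 3 := by
  simp only [sg, m0, m1]; omega

lemma Pchain_adj (hn : 1 < n) (e : EIdx G VL) :
    ∀ t, t < n → (G' G VL n k).Adj (Pchain e t) (Pchain e (t + 1)) := by
  intro t ht
  by_cases h0 : t = 0
  · subst h0
    rw [Pchain_eval0, Pchain_evalm (by omega) (by omega)]
    apply adjR
    · simp [orig, sk]
    · left; left
      exact ⟨e, ⟨0, by omega⟩, rfl, rfl, rfl⟩
  · by_cases h1 : t ≤ n - 2
    · rw [Pchain_evalm (by omega) (by omega), Pchain_evalm (t := t + 1) (by omega) (by omega)]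
      apply adjR
      · simp only [sk, ne_eq, Sum.inr.injEq, Sum.inl.injEq, Prod.mk.injEq, Fin.mk.injEq]
        exact fun hc => absurd hc.2 (by omega)
      · left
        right; right; right; left
        refine ⟨e, ⟨t - 1, by omega⟩, ⟨t + 1 - 1, by omega⟩, rfl, rfl, ?_⟩
        show t + 1 - 1 = t - 1 + 1
        omega
    · have ht' : t = n - 1 := by omega
      rw [Pchain_evalm (by omega) (by omega), Pchain_evale (by omega)]
      apply adjR
      · simp [orig, sk]
      · right
        right; left
        refine ⟨e, ⟨t - 1, by omega⟩, rfl, rfl, ?_⟩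
        show t - 1 = n - 2
        omega

lemma Tchain_adj (h3 : 3 ≤ k) (v : V) :
    ∀ t, t < k → (G' G VL n k).Adj (Tchain k v t) (Tchain k v (t + 1)) := by
  intro t ht
  by_cases h0 : t = 0
  · subst h0
    rw [Tchain_eval0, Tchain_evalm (by omega) (by omega)]
    apply adjR
    · simp [orig, sk]
    · left; right; right; left
      exact ⟨v, ⟨0, by omega⟩, rfl, rfl, rfl⟩
  · by_cases h1 : t ≤ k - 2
    · rw [Tchain_evalm (by omega) (by omega), Tchain_evalm (t := t + 1) (by omega) (by omega)]
      apply adjR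
      · simp only [sk, ne_eq, Sum.inr.injEq, Sum.inl.injEq, Prod.mk.injEq, Fin.mk.injEq]
        exact fun hc => absurd hc.2 (by omega)
      · left
        right; right; right; right; left
        refine ⟨v, ⟨t - 1, by omega⟩, ⟨t + 1 - 1, by omega⟩, rfl, rfl, ?_⟩
        show t + 1 - 1 = t - 1 + 1
        omega
    · have ht' : t = k - 1 := by omega
      rw [Tchain_evalm (by omega) (by omega), Tchain_evale (by omega)]
      apply adjR
      · simp [sk, tnd]
      · left
        right; right; right; right; right; left
        refine ⟨v, ⟨t - 1, by omega⟩, rfl, rfl, ?_⟩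
        show t - 1 = k - 2
        omega

lemma GBchain_adj (h3 : 3 ≤ k) (s : Site G VL n k) :
    ∀ t, t < k → (G' G VL n k).Adj (GBchain s t) (GBchain s (t + 1)) := by
  intro t ht
  obtain ⟨f1, f2, f3, f4, f5, f6, f7⟩ := sg_facts (k := k) h3
  by_cases h0 : t = 0
  · subst h0
    by_cases hs : sg k = 0
    · rw [GBchain_eval0, GBchain_evale (by omega) (by omega) h3]
      apply adjR
      · simp [sk, gad]
      · left
        right; right; right; right; right; right; right; left
        refine ⟨s, ⟨k - 1, by omega⟩, rfl, rfl, hs, ?_, ?_⟩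
        · show m0 k ≤ k - 1
          omega
        · show k - 1 ≤ m1 k
          omega
    · rw [GBchain_eval0, GBchain_evalm (by omega) (by omega)]
      apply adjR
      · simp [sk, gad]
      · left
        right; right; right; right; right; right; left
        exact ⟨s, ⟨0, by omega⟩, rfl, rfl, rfl⟩
  · by_cases h1 : t + 1 ≤ sg k
    · rw [GBchain_evalm (by omega) (by omega), GBchain_evalm (t := t + 1) (by omega) (by omega)]
      apply adjR
      · simp only [gad, ne_eq, Sum.inr.injEq, Sum.inl.injEq, Prod.mk.injEq, Fin.mk.injEq]
        exact fun hc => absurd hc.2 (by omega)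
      · left
        right; right; right; right; right; right; right; right; left
        refine ⟨s, ⟨t - 1, by omega⟩, ⟨t + 1 - 1, by omega⟩, rfl, rfl, ?_⟩
        show t + 1 - 1 = t - 1 + 1
        omega
    · by_cases h2 : t ≤ sg k
      · have ht' : t = sg k := by omega
        rw [GBchain_evalm (by omega) (by omega), GBchain_evale (by omega) (by omega) h3]
        apply adjR
        · simp [gad]
        · left
          right; right; right; right; right; right; right; right; right; left
          refine ⟨s, ⟨t - 1, by omega⟩, ⟨k - (t + 1), by omega⟩, rfl, rfl, ?_, ?_, ?_⟩
          · show t - 1 + 1 = sg k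
            omega
          · show m0 k ≤ k - (t + 1)
            omega
          · show k - (t + 1) ≤ m1 k
            omega
      · rw [GBchain_evale (by omega) (by omega) h3,
          GBchain_evale (t := t + 1) (by omega) (by omega) h3]
        apply adjR
        · simp only [gad, ne_eq, Sum.inr.injEq, Sum.inl.injEq, Prod.mk.injEq, Fin.mk.injEq]
          exact fun hc => absurd hc.2 (by omega)
        · right
          right; right; right; right; right; right; right; right; right; right
          refine ⟨s, ⟨k - (t + 1), by omega⟩, ⟨k - t, by omega⟩, rfl, rfl, ?_⟩
          show k - t = k - (t + 1) + 1
          omega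

lemma GRchain_adj (h3 : 3 ≤ k) (s : Site G VL n k) :
    ∀ t, t < k → (G' G VL n k).Adj (GRchain s t) (GRchain s (t + 1)) := by
  intro t ht
  obtain ⟨f1, f2, f3, f4, f5, f6, f7⟩ := sg_facts (k := k) h3
  by_cases h0 : t = 0
  · subst h0
    by_cases hs : sg k = 0
    · rw [GRchain_eval0, GRchain_evale (by omega) (by omega) h3]
      apply adjR
      · simp [sk, gad]
      · left
        right; right; right; right; right; right; right; left
        refine ⟨s, ⟨0 + 1 + 1, by omega⟩, rfl, rfl, hs, ?_, ?_⟩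
        · show m0 k ≤ 0 + 1 + 1
          omega
        · show 0 + 1 + 1 ≤ m1 k
          omega
    · rw [GRchain_eval0, GRchain_evalm (by omega) (by omega)]
      apply adjR
      · simp [sk, gad]
      · left
        right; right; right; right; right; right; left
        exact ⟨s, ⟨0, by omega⟩, rfl, rfl, rfl⟩
  · by_cases h1 : t + 1 ≤ sg k
    · rw [GRchain_evalm (by omega) (by omega), GRchain_evalm (t := t + 1) (by omega) (by omega)]
      apply adjR
      · simp only [gad, ne_eq, Sum.inr.injEq, Sum.inl.injEq, Prod.mk.injEq, Fin.mk.injEq]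
        exact fun hc => absurd hc.2 (by omega)
      · left
        right; right; right; right; right; right; right; right; left
        refine ⟨s, ⟨t - 1, by omega⟩, ⟨t + 1 - 1, by omega⟩, rfl, rfl, ?_⟩
        show t + 1 - 1 = t - 1 + 1
        omega
    · by_cases h2 : t ≤ sg k
      · have ht' : t = sg k := by omega
        rw [GRchain_evalm (by omega) (by omega), GRchain_evale (by omega) (by omega) h3]
        apply adjR
        · simp [gad]
        · left
          right; right; right; right; right; right; right; right; right; left
          refine ⟨s, ⟨t - 1, by omega⟩, ⟨t + 1 + 1, by omega⟩, rfl, rfl, ?_, ?_, ?_⟩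
          · show t - 1 + 1 = sg k
            omega
          · show m0 k ≤ t + 1 + 1
            omega
          · show t + 1 + 1 ≤ m1 k
            omega
      · rw [GRchain_evale (by omega) (by omega) h3,
          GRchain_evale (t := t + 1) (by omega) (by omega) h3]
        apply adjR
        · simp only [gad, ne_eq, Sum.inr.injEq, Sum.inl.injEq, Prod.mk.injEq, Fin.mk.injEq]
          exact fun hc => absurd hc.2 (by omega)
        · left
          right; right; right; right; right; right; right; right; right; right
          exact ⟨s, ⟨t + 1, by omega⟩, ⟨t + 1 + 1, by omega⟩, rfl, rfl, rfl⟩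

lemma ZBchain_adj (s : Site G VL n k) (z : Fin (k + 2)) :
    ∀ t, t < z.val → (G' G VL n k).Adj (ZBchain s z t) (ZBchain s z (t + 1)) := by
  intro t ht
  have hz := z.isLt
  rw [ZBchain_eval, ZBchain_eval]
  apply adjR
  · simp only [gad, ne_eq, Sum.inr.injEq, Sum.inl.injEq, Prod.mk.injEq, Fin.mk.injEq]
    exact fun hc => absurd hc.2 (by omega)
  · right
    right; right; right; right; right; right; right; right; right; right
    refine ⟨s, ⟨z.val - (t + 1), by omega⟩, ⟨z.val - t, by omega⟩, rfl, rfl, ?_⟩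
    show z.val - t = z.val - (t + 1) + 1
    omega

lemma ZRchain_adj (s : Site G VL n k) (z : Fin (k + 2)) :
    ∀ t, t < k + 1 - z.val → (G' G VL n k).Adj (ZRchain s z t) (ZRchain s z (t + 1)) := by
  intro t ht
  have hz := z.isLt
  rw [ZRchain_eval (by omega), ZRchain_eval (by omega)]
  apply adjR
  · simp only [gad, ne_eq, Sum.inr.injEq, Sum.inl.injEq, Prod.mk.injEq, Fin.mk.injEq]
    exact fun hc => absurd hc.2 (by omega)
  · left
    right; right; right; right; right; right; right; right; right; right
    refine ⟨s, ⟨z.val + t, by omega⟩, ⟨z.val + (t + 1), by omega⟩, rfl, rfl, ?_⟩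
    show z.val + (t + 1) = z.val + t + 1
    omega

end Chains

/-! ### distance upper bounds -/

def blueOf (s : Site G VL n k) : W G VL n k := gad s (Sum.inr ⟨0, by omega⟩)
def redOf (s : Site G VL n k) : W G VL n k := gad s (Sum.inr ⟨k + 1, by omega⟩)

section Upper
variable (h3 : 3 ≤ k)

lemma host_blue (h3 : 3 ≤ k) (s : Site G VL n k) :
    (G' G VL n k).edist (sk s) (blueOf s) ≤ (k : ℕ∞) := by
  obtain ⟨f1, f2, f3, f4, f5, f6, f7⟩ := sg_facts (k := k) h3
  have h := chain_le (H := G' G VL n k) (GBchain s) 0 k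
    (fun i h1 h2 => GBchain_adj h3 s i (by omega))
  rw [Nat.zero_add, GBchain_eval0, GBchain_evale (by omega) (le_refl k) h3] at h
  have he : (⟨k - k, by omega⟩ : Fin (k + 2)) = ⟨0, by omega⟩ :=
    Fin.ext (show k - k = 0 by omega)
  rw [he] at h
  exact h

lemma host_red (h3 : 3 ≤ k) (s : Site G VL n k) :
    (G' G VL n k).edist (sk s) (redOf s) ≤ (k : ℕ∞) := by
  obtain ⟨f1, f2, f3, f4, f5, f6, f7⟩ := sg_facts (k := k) h3
  have h := chain_le (H := G' G VL n k) (GRchain s) 0 k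
    (fun i h1 h2 => GRchain_adj h3 s i (by omega))
  rw [Nat.zero_add, GRchain_eval0, GRchain_evale (by omega) (le_refl k) h3] at h
  exact h

lemma stem_blue (h3 : 3 ≤ k) (s : Site G VL n k) (st : Fin (sg k)) :
    (G' G VL n k).edist (gad s (Sum.inl st)) (blueOf s) ≤ (k : ℕ∞) := by
  obtain ⟨f1, f2, f3, f4, f5, f6, f7⟩ := sg_facts (k := k) h3
  have hst := st.isLt
  have h := chain_le (H := G' G VL n k) (GBchain s) (st.val + 1) (k - (st.val + 1))
    (fun i h1 h2 => GBchain_adj h3 s i (by omega))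
  rw [show st.val + 1 + (k - (st.val + 1)) = k by omega,
    GBchain_evalm (by omega) (by omega), GBchain_evale (by omega) (le_refl k) h3] at h
  have he1 : (⟨st.val + 1 - 1, by omega⟩ : Fin (sg k)) = st :=
    Fin.ext (show st.val + 1 - 1 = st.val by omega)
  have he2 : (⟨k - k, by omega⟩ : Fin (k + 2)) = ⟨0, by omega⟩ :=
    Fin.ext (show k - k = 0 by omega)
  rw [he1, he2] at h
  have hcast : ((k - (st.val + 1) : ℕ) : ℕ∞) ≤ (k : ℕ∞) := by
    exact_mod_cast (show (k - (st.val + 1) : ℕ) ≤ k by omega)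
  exact h.trans hcast

lemma stem_red (h3 : 3 ≤ k) (s : Site G VL n k) (st : Fin (sg k)) :
    (G' G VL n k).edist (gad s (Sum.inl st)) (redOf s) ≤ (k : ℕ∞) := by
  obtain ⟨f1, f2, f3, f4, f5, f6, f7⟩ := sg_facts (k := k) h3
  have hst := st.isLt
  have h := chain_le (H := G' G VL n k) (GRchain s) (st.val + 1) (k - (st.val + 1))
    (fun i h1 h2 => GRchain_adj h3 s i (by omega))
  rw [show st.val + 1 + (k - (st.val + 1)) = k by omega,
    GRchain_evalm (by omega) (by omega), GRchain_evale (by omega) (le_refl k) h3] at h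
  have he1 : (⟨st.val + 1 - 1, by omega⟩ : Fin (sg k)) = st :=
    Fin.ext (show st.val + 1 - 1 = st.val by omega)
  rw [he1] at h
  have hcast : ((k - (st.val + 1) : ℕ) : ℕ∞) ≤ (k : ℕ∞) := by
    exact_mod_cast (show (k - (st.val + 1) : ℕ) ≤ k by omega)
  exact h.trans hcast

lemma zv_blue (h3 : 3 ≤ k) (s : Site G VL n k) (z : Fin (k + 2)) (hz : z.val ≤ k) :
    (G' G VL n k).edist (gad s (Sum.inr z)) (blueOf s) ≤ (k : ℕ∞) := by
  have h := chain_le (H := G' G VL n k) (ZBchain s z) 0 z.val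
    (fun i h1 h2 => ZBchain_adj s z i (by omega))
  rw [Nat.zero_add, ZBchain_eval, ZBchain_eval] at h
  have he1 : (⟨z.val - 0, by have := z.isLt; omega⟩ : Fin (k + 2)) = z :=
    Fin.ext (show z.val - 0 = z.val by omega)
  have he2 : (⟨z.val - z.val, by have := z.isLt; omega⟩ : Fin (k + 2)) = ⟨0, by omega⟩ :=
    Fin.ext (show z.val - z.val = 0 by omega)
  rw [he1, he2] at h
  have hcast : ((z.val : ℕ) : ℕ∞) ≤ (k : ℕ∞) := by
    exact_mod_cast (show (z.val : ℕ) ≤ k by omega)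
  exact h.trans hcast

lemma zv_red (h3 : 3 ≤ k) (s : Site G VL n k) (z : Fin (k + 2)) (hz : 1 ≤ z.val) :
    (G' G VL n k).edist (gad s (Sum.inr z)) (redOf s) ≤ (k : ℕ∞) := by
  have hzlt := z.isLt
  have h := chain_le (H := G' G VL n k) (ZRchain s z) 0 (k + 1 - z.val)
    (fun i h1 h2 => ZRchain_adj s z i (by omega))
  rw [Nat.zero_add, ZRchain_eval (by omega), ZRchain_eval (le_refl _)] at h
  have he1 : (⟨z.val + 0, by omega⟩ : Fin (k + 2)) = z :=
    Fin.ext (show z.val + 0 = z.val by omega)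
  have he2 : (⟨z.val + (k + 1 - z.val), by omega⟩ : Fin (k + 2)) = ⟨k + 1, by omega⟩ :=
    Fin.ext (show z.val + (k + 1 - z.val) = k + 1 by omega)
  rw [he1, he2] at h
  have hcast : ((k + 1 - z.val : ℕ) : ℕ∞) ≤ (k : ℕ∞) := by
    exact_mod_cast (show (k + 1 - z.val : ℕ) ≤ k by omega)
  exact h.trans hcast

lemma tail_red (h3 : 3 ≤ k) (v : V) :
    (G' G VL n k).edist (orig v) (tnd v) ≤ (k : ℕ∞) := by
  have h := chain_le (H := G' G VL n k) (Tchain k v) 0 k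
    (fun i h1 h2 => Tchain_adj h3 v i (by omega))
  rw [Nat.zero_add, Tchain_eval0, Tchain_evale (by omega)] at h
  exact h

lemma epath_le (hn : 1 < n) (e : EIdx G VL) :
    (G' G VL n k).edist (orig e.1.1) (orig e.1.2) ≤ (n : ℕ∞) := by
  have h := chain_le (H := G' G VL n k) (Pchain e) 0 n
    (fun i h1 h2 => Pchain_adj hn e i (by omega))
  rw [Nat.zero_add, Pchain_eval0, Pchain_evale (by omega)] at h
  exact h

end Upper

/-! ### colours and assembly helpers -/

def isBlue (VR : Finset V) : W G VL n k → Prop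
  | gad _ (Sum.inr z) => z.val = 0
  | tnd v => v ∈ VR
  | _ => False

def isRed : W G VL n k → Prop
  | gad _ (Sum.inr z) => z.val = k + 1
  | tnd v => v ∈ VL
  | _ => False

lemma lb_lemma (f : W G VL n k → ℕ)
    (hR : ∀ a b, R G VL n k a b → f a ≤ f b + 1 ∧ f b ≤ f a + 1)
    {c w : W G VL n k} {m : ℕ} (h0 : f c = 0) (hm : m ≤ f w) :
    (m : ℕ∞) ≤ (G' G VL n k).edist w c := by
  have := le_edist_of (H := G' G VL n k) f (lip_adj f hR) (u := c) (v := w) h0 hm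
  rwa [SimpleGraph.edist_comm] at this

section Values
variable {s0 s : Site G VL n k} {c : Bool} {x v : V}

lemma famA_orig : famA (n := n) (k := k) s0 c (orig x) = k + 1 := rfl
lemma famA_tnd : famA (n := n) (k := k) s0 c (tnd v) = k + 1 := rfl

lemma famA_self_blue : famA (n := n) (k := k) s0 true (blueOf s0) = 0 := by
  simp [famA, blueOf, betaB]

lemma famA_self_red : famA (n := n) (k := k) s0 false (redOf s0) = 0 := by
  simp [famA, redOf, betaR]

lemma famA_colored_ne (h3 : 3 ≤ k) (w : W G VL n k)
    (hw : isBlue VR w ∨ isRed w)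
    (hb : c = true → w ≠ blueOf s0) (hr : c = false → w ≠ redOf s0) :
    famA (n := n) (k := k) s0 c w = k + 1 := by
  rcases w with v | (s | (⟨s, g⟩ | v))
  · rfl
  · simp only [isBlue, isRed] at hw; tauto
  · rcases g with st | z
    · simp only [isBlue, isRed] at hw; tauto
    · have hz : z.val = 0 ∨ z.val = k + 1 := by
        simp only [isBlue, isRed] at hw; tauto
      by_cases hss : s = s0
      · subst hss
        cases c
        · have hzz : z.val = 0 := by
            rcases hz with hz | hz
            · exact hz
            · have hzf : z = ⟨k + 1, by omega⟩ := Fin.ext hz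
              exact absurd (by rw [hzf]; rfl) (hr rfl)
          have : k + 1 - z.val = k + 1 := by omega
          simp [famA, betaR, this]
        · have hzz : z.val = k + 1 := by
            rcases hz with hz | hz
            · have hzf : z = ⟨0, by omega⟩ := Fin.ext hz
              exact absurd (by rw [hzf]; rfl) (hb rfl)
            · exact hz
          simp [famA, betaB, hzz]
      · simp [famA, hss]
  · simp only [isBlue, isRed] at hw
    rfl

end Values

section Values2
variable {x v u : V}

lemma famB_self : famB (G := G) (VL := VL) (n := n) k x (tnd x) = 0 := by simp [famB]

lemma famB_orig_ge (h : n < k) :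
    n + 1 ≤ famB (G := G) (VL := VL) (n := n) k x (orig v) := by
  simp only [famB]; split_ifs <;> omega

lemma famB_orig_other (h : v ≠ x) :
    famB (G := G) (VL := VL) (n := n) k x (orig v) = k + 1 := by
  simp [famB, h]

lemma famB_colored_ne (h3 : 3 ≤ k) (w : W G VL n k) {VR : Finset V}
    (hw : isBlue VR w ∨ isRed w) (hne : w ≠ tnd x) :
    famB (G := G) (VL := VL) (n := n) k x w = k + 1 := by
  rcases w with v | (s | (⟨s, g⟩ | v))
  · simp only [isBlue, isRed] at hw; tauto
  · simp only [isBlue, isRed] at hw; tauto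
  · rcases g with st | z
    · simp only [isBlue, isRed] at hw; tauto
    · have hz : z.val = 0 ∨ z.val = k + 1 := by
        simp only [isBlue, isRed] at hw; tauto
      rcases s with ⟨e, i⟩ | ⟨u, j⟩
      · rfl
      · by_cases hux : u = x
        · subst hux
          have hj := j.isLt
          have hg : gamma k (Sum.inr z) = k := by
            simp only [gamma, sg, m0, m1]
            rcases hz with hz | hz <;> rw [hz] <;> delta m0 m1 <;> split_ifs <;> omega
          simp only [famB, if_pos rfl, hg, if_true]
          omega
        · simp [famB, hux]
  · have hvx : v ≠ x := fun h => hne (by rw [h]; rfl)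
    simp [famB, hvx]

lemma base_self : base G n k u u = 0 := by simp [base]

lemma base_of_adj (h : G.Adj u v) : base G n k u v = n := by
  unfold base; rw [if_neg h.ne', if_pos h]

lemma base_of_nonadj (h1 : v ≠ u) (h2 : ¬G.Adj u v) : base G n k u v = k + 1 := by
  unfold base; rw [if_neg h1, if_neg h2]

lemma famC_orig : famC (G := G) (VL := VL) (n := n) (k := k) u (orig v) = base G n k u v := rfl

lemma famC_tnd_other (hn : 1 < n) (hnk : n < k) (h : v ≠ u) :
    famC (G := G) (VL := VL) (n := n) (k := k) u (tnd v) = k + 1 := by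
  have hb : base G n k u v = n ∨ base G n k u v = k + 1 := by
    unfold base; rw [if_neg h]; split_ifs <;> tauto
  simp only [famC]
  rcases hb with hb | hb <;> rw [hb] <;> omega

end Values2

end Stmt16

open Stmt16


/-- for every finite bipartite simple graph `G` with parts `VL`, `VR` and all
integers `n`, `k` with `1 < n < k < 2n`, there is a finite simple graph `G'` containing the
vertices of `G` (via an embedding `ι`), together with disjoint sets `Blue0`, `Red0` of new
vertices, satisfying conditions (a), (b), (b'), (c), (d). -/
theorem stmt16 {V : Type u} [Fintype V] (G : SimpleGraph V) (VL VR : Finset V)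
    (hcover : ∀ v : V, v ∈ VL ∨ v ∈ VR) (hparts : Disjoint VL VR)
    (hbip : ∀ ⦃x y : V⦄, G.Adj x y → (x ∈ VL ∧ y ∈ VR) ∨ (x ∈ VR ∧ y ∈ VL))
    (n k : ℕ) (hn : 1 < n) (hnk : n < k) (hk2n : k < 2 * n) :
    ∃ (W : Type u) (_ : Fintype W) (G' : SimpleGraph W) (ι : V ↪ W)
      (Blue0 Red0 : Finset W),
      Disjoint Blue0 Red0 ∧ (∀ v : V, ι v ∉ Blue0 ∧ ι v ∉ Red0) ∧
      -- (a) every extra vertex is within distance `k` of `Blue0` and of `Red0`: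
      (∀ w : W, (∀ v : V, ι v ≠ w) → w ∉ Blue0 → w ∉ Red0 →
        (∃ b ∈ Blue0, G'.edist w b ≤ (k : ℕ∞)) ∧ (∃ r ∈ Red0, G'.edist w r ≤ (k : ℕ∞))) ∧
      -- (b) every `x ∈ VL` is within distance `k` of some vertex of `Red0`, at distance at
      -- least `k+1` from every vertex of `Blue0`, and at distance at least `n+1` from
      -- every vertex of `Red0`:
      (∀ x ∈ VL, (∃ r ∈ Red0, G'.edist (ι x) r ≤ (k : ℕ∞)) ∧
        (∀ b ∈ Blue0, (k : ℕ∞) + 1 ≤ G'.edist (ι x) b) ∧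
        (∀ r ∈ Red0, (n : ℕ∞) + 1 ≤ G'.edist (ι x) r)) ∧
      -- (b') every `y ∈ VR` is within distance `k` of some vertex of `Blue0`, at distance
      -- at least `k+1` from every vertex of `Red0`, and at distance at least `n+1` from
      -- every vertex of `Blue0`:
      (∀ y ∈ VR, (∃ b ∈ Blue0, G'.edist (ι y) b ≤ (k : ℕ∞)) ∧
        (∀ r ∈ Red0, (k : ℕ∞) + 1 ≤ G'.edist (ι y) r) ∧
        (∀ b ∈ Blue0, (n : ℕ∞) + 1 ≤ G'.edist (ι y) b)) ∧
      -- (c) distances between vertices of `V(G) = VL ∪ VR`: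
      (∀ u v : V, u ≠ v →
        (G.Adj u v → G'.edist (ι u) (ι v) = (n : ℕ∞)) ∧
        (¬G.Adj u v → (k : ℕ∞) + 1 ≤ G'.edist (ι u) (ι v))) ∧
      -- (d) distinct vertices of `Blue0 ∪ Red0` are at distance at least `k+1`:
      (∀ w₁ w₂ : W, w₁ ∈ Blue0 ∨ w₁ ∈ Red0 → w₂ ∈ Blue0 ∨ w₂ ∈ Red0 → w₁ ≠ w₂ →
        (k : ℕ∞) + 1 ≤ G'.edist w₁ w₂) := by
  classical
  have h3 : 3 ≤ k := by omega
  have hck : ((k + 1 : ℕ) : ℕ∞) = (k : ℕ∞) + 1 := by push_cast; ring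
  have hcn : ((n + 1 : ℕ) : ℕ∞) = (n : ℕ∞) + 1 := by push_cast; ring
  refine ⟨W G VL n k, Fintype.ofFinite _, G' G VL n k,
    ⟨fun v => orig v, fun a b h => Sum.inl.inj h⟩,
    Finset.univ.filter (fun w => isBlue (G := G) (VL := VL) (n := n) (k := k) VR w),
    Finset.univ.filter (fun w => isRed (G := G) (VL := VL) (n := n) (k := k) w),
    ?_, ?_, ?_, ?_, ?_, ?_, ?_⟩
  -- membership abbreviations are re-derived in each part via simp
  · -- Disjointness
    rw [Finset.disjoint_left]
    intro w hwB hwR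
    simp only [Finset.mem_filter, Finset.mem_univ, true_and] at hwB hwR
    rcases w with v | (s | (⟨s, g⟩ | v))
    · exact hwB
    · exact hwB
    · rcases g with st | z
      · exact hwB
      · simp only [isBlue, isRed] at hwB hwR
        omega
    · simp only [isBlue, isRed] at hwB hwR
      exact Finset.disjoint_left.mp hparts hwR hwB
  · -- ι avoids the colours
    intro v
    constructor <;> simp only [Finset.mem_filter, Finset.mem_univ, true_and] <;> simp [isBlue, isRed, orig]
  · -- (a)
    intro w hw hwB hwR
    simp only [Finset.mem_filter, Finset.mem_univ, true_and] at hwB hwR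
    rcases w with v | (s | (⟨s, g⟩ | v))
    · exact absurd rfl (hw v)
    · refine ⟨⟨blueOf s, ?_, host_blue h3 s⟩, ⟨redOf s, ?_, host_red h3 s⟩⟩
      · simp [Finset.mem_filter, isBlue, blueOf]
      · simp only [Finset.mem_filter, Finset.mem_univ, true_and]; simp [Finset.mem_filter, isRed, redOf]
    · rcases g with st | z
      · refine ⟨⟨blueOf s, ?_, stem_blue h3 s st⟩, ⟨redOf s, ?_, stem_red h3 s st⟩⟩
        · simp [Finset.mem_filter, isBlue, blueOf]
        · simp only [Finset.mem_filter, Finset.mem_univ, true_and]; simp [Finset.mem_filter, isRed, redOf]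
      · have hz0 : z.val ≠ 0 := fun h => hwB (by simpa [isBlue] using h)
        have hz1 : z.val ≠ k + 1 := fun h => hwR (by simpa [isRed] using h)
        have hzlt := z.isLt
        refine ⟨⟨blueOf s, ?_, zv_blue h3 s z (by omega)⟩,
          ⟨redOf s, ?_, zv_red h3 s z (by omega)⟩⟩
        · simp [Finset.mem_filter, isBlue, blueOf]
        · simp only [Finset.mem_filter, Finset.mem_univ, true_and]; simp [Finset.mem_filter, isRed, redOf]
    · rcases hcover v with hv | hv
      · exact absurd (by simpa [isRed] using hv) hwR
      · exact absurd (by simpa [isBlue] using hv) hwB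
  · -- (b)
    intro x hx
    have hxR : x ∉ VR := Finset.disjoint_left.mp hparts hx
    refine ⟨⟨tnd x, ?_, ?_⟩, ?_, ?_⟩
    · simp only [Finset.mem_filter, Finset.mem_univ, true_and]; simp [Finset.mem_filter, isRed, hx]
    · exact tail_red (n := n) h3 x
    · -- far from all blues
      intro b hb
      simp only [Finset.mem_filter, Finset.mem_univ, true_and] at hb
      show (k : ℕ∞) + 1 ≤ (G' G VL n k).edist (orig x) b
      rw [← hck]
      rcases b with v | (s | (⟨s, g⟩ | v))
      · exact absurd hb (by simp [isBlue])
      · exact absurd hb (by simp [isBlue])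
      · rcases g with st | z
        · exact absurd hb (by simp [isBlue])
        · have hzf : z = ⟨0, by omega⟩ := Fin.ext (by simpa [isBlue] using hb)
          subst hzf
          exact lb_lemma _ (famA_lip hn hnk s true) famA_self_blue (le_of_eq famA_orig.symm)
      · have hvR : v ∈ VR := by simpa [isBlue] using hb
        have hxv : x ≠ v := fun h => hxR (h ▸ hvR)
        exact lb_lemma _ (famB_lip hn hnk v) famB_self
          (le_of_eq (famB_orig_other hxv).symm)
    · -- at least n+1 from all reds
      intro r hr
      simp only [Finset.mem_filter, Finset.mem_univ, true_and] at hr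
      show (n : ℕ∞) + 1 ≤ (G' G VL n k).edist (orig x) r
      rw [← hcn]
      rcases r with v | (s | (⟨s, g⟩ | v))
      · exact absurd hr (by simp [isRed])
      · exact absurd hr (by simp [isRed])
      · rcases g with st | z
        · exact absurd hr (by simp [isRed])
        · have hzf : z = ⟨k + 1, by omega⟩ := Fin.ext (by simpa [isRed] using hr)
          subst hzf
          exact lb_lemma _ (famA_lip hn hnk s false) famA_self_red
            (le_trans (by omega) (le_of_eq famA_orig.symm))
      · exact lb_lemma _ (famB_lip hn hnk v) famB_self (famB_orig_ge hnk)
  · -- (b')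
    intro y hy
    have hyL : y ∉ VL := Finset.disjoint_right.mp hparts hy
    refine ⟨⟨tnd y, ?_, ?_⟩, ?_, ?_⟩
    · simp only [Finset.mem_filter, Finset.mem_univ, true_and]; simp [Finset.mem_filter, isBlue, hy]
    · exact tail_red (n := n) h3 y
    · intro r hr
      simp only [Finset.mem_filter, Finset.mem_univ, true_and] at hr
      show (k : ℕ∞) + 1 ≤ (G' G VL n k).edist (orig y) r
      rw [← hck]
      rcases r with v | (s | (⟨s, g⟩ | v))
      · exact absurd hr (by simp [isRed])
      · exact absurd hr (by simp [isRed])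
      · rcases g with st | z
        · exact absurd hr (by simp [isRed])
        · have hzf : z = ⟨k + 1, by omega⟩ := Fin.ext (by simpa [isRed] using hr)
          subst hzf
          exact lb_lemma _ (famA_lip hn hnk s false) famA_self_red (le_of_eq famA_orig.symm)
      · have hvL : v ∈ VL := by simpa [isRed] using hr
        have hyv : y ≠ v := fun h => hyL (h ▸ hvL)
        exact lb_lemma _ (famB_lip hn hnk v) famB_self
          (le_of_eq (famB_orig_other hyv).symm)
    · intro b hb
      simp only [Finset.mem_filter, Finset.mem_univ, true_and] at hb
      show (n : ℕ∞) + 1 ≤ (G' G VL n k).edist (orig y) b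
      rw [← hcn]
      rcases b with v | (s | (⟨s, g⟩ | v))
      · exact absurd hb (by simp [isBlue])
      · exact absurd hb (by simp [isBlue])
      · rcases g with st | z
        · exact absurd hb (by simp [isBlue])
        · have hzf : z = ⟨0, by omega⟩ := Fin.ext (by simpa [isBlue] using hb)
          subst hzf
          exact lb_lemma _ (famA_lip hn hnk s true) famA_self_blue
            (le_trans (by omega) (le_of_eq famA_orig.symm))
      · exact lb_lemma _ (famB_lip hn hnk v) famB_self (famB_orig_ge hnk)
  · -- (c)
    intro u v huv
    show (G.Adj u v → (G' G VL n k).edist (orig u) (orig v) = (n : ℕ∞)) ∧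
        (¬G.Adj u v → (k : ℕ∞) + 1 ≤ (G' G VL n k).edist (orig u) (orig v))
    constructor
    · intro hadj
      have hlow : (n : ℕ∞) ≤ (G' G VL n k).edist (orig u) (orig v) := by
        rw [SimpleGraph.edist_comm]
        exact lb_lemma _ (famC_lip hn hnk hk2n u) (by rw [famC_orig, base_self])
          (le_of_eq (by rw [famC_orig, base_of_adj hadj]))
      rcases hbip hadj with ⟨hu, hv⟩ | ⟨hu, hv⟩
      · have hup := epath_le (G := G) (VL := VL) (k := k) hn ⟨(u, v), hu, hadj⟩
        exact le_antisymm hup hlow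
      · have hup := epath_le (G := G) (VL := VL) (k := k) hn ⟨(v, u), hv, hadj.symm⟩
        rw [SimpleGraph.edist_comm] at hup
        exact le_antisymm hup hlow
    · intro hnadj
      rw [← hck, SimpleGraph.edist_comm]
      exact lb_lemma _ (famC_lip hn hnk hk2n u) (by rw [famC_orig, base_self])
        (le_of_eq (by rw [famC_orig, base_of_nonadj (fun h => huv h.symm) hnadj]))
  · -- (d)
    intro w1 w2 hw1 hw2 hne
    have hw1' : isBlue (G := G) (VL := VL) (n := n) (k := k) VR w1 ∨
        isRed (G := G) (VL := VL) (n := n) (k := k) w1 := by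
      rcases hw1 with h | h <;> simp only [Finset.mem_filter, Finset.mem_univ, true_and] at h
      · exact Or.inl h
      · exact Or.inr h
    have hw2' : isBlue (G := G) (VL := VL) (n := n) (k := k) VR w2 ∨
        isRed (G := G) (VL := VL) (n := n) (k := k) w2 := by
      rcases hw2 with h | h <;> simp only [Finset.mem_filter, Finset.mem_univ, true_and] at h
      · exact Or.inl h
      · exact Or.inr h
    rw [← hck, SimpleGraph.edist_comm]
    rcases w1 with v | (s | (⟨s, g⟩ | v))
    · simp only [isBlue, isRed] at hw1'; tauto
    · simp only [isBlue, isRed] at hw1'; tauto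
    · rcases g with st | z
      · simp only [isBlue, isRed] at hw1'; tauto
      · have hz : z.val = 0 ∨ z.val = k + 1 := by
          simp only [isBlue, isRed] at hw1'; tauto
        rcases hz with hz | hz
        · have hzf : z = ⟨0, by omega⟩ := Fin.ext hz
          rw [hzf]
          exact lb_lemma _ (famA_lip hn hnk s true) famA_self_blue
            (le_of_eq (famA_colored_ne h3 w2 hw2'
              (fun _ => fun hh => hne (by rw [hzf, hh]; rfl)) (by simp)).symm)
        · have hzf : z = ⟨k + 1, by omega⟩ := Fin.ext hz
          rw [hzf]
          exact lb_lemma _ (famA_lip hn hnk s false) famA_self_red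
            (le_of_eq (famA_colored_ne h3 w2 hw2' (by simp)
              (fun _ => fun hh => hne (by rw [hzf, hh]; rfl))).symm)
    · exact lb_lemma _ (famB_lip hn hnk v) famB_self
        (le_of_eq (famB_colored_ne h3 w2 hw2'
          (fun hh => hne (by rw [hh]; rfl))).symm)
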